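/- arXiv:math/9905016 — 6 statements merged into one kernel-verified Lean document; each statement's English description precedes it below -/
import Mathlib

section
/- Let φ : ℳ → P(ℕ)/fin be a Boolean-algebra embedding and let Φ be an exact lifting of φ. Then there is a sequence ⟨t_n : n ∈ ω⟩ in 2^{<ω} such that the set O = {(n, t_n) : n ∈ ω}, coding the open set ⋃_{n∈ω} {n} × [t_n], satisfies Φ(O) ≠* Φ[O]. Consequently, no exact lifting of an embedding of ℳ into P(ℕ)/fin is complete, where a lifting Φ is complete if Φ(O) =* Φ[O] for every f ∈ ω^ω and every O ⊆ B_f. -/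
open Set MeasureTheory
open scoped ENNReal

namespace Paper

/-- `X` and `Y` agree modulo a finite set. -/
def AlmostEq {α : Type} (X Y : Set α) : Prop := (symmDiff X Y).Finite

/-- the "equal mod finite" setoid on `Set α` -/
def finSetoid (α : Type) : Setoid (Set α) where
  r X Y := (symmDiff X Y).Finite
  iseqv := by
    constructor
    · intro X; simp
    · intro X Y h; rwa [symmDiff_comm]
    · intro X Y Z h1 h2
      exact (h1.union h2).subset (symmDiff_triangle X Y Z)

/-- the quotient Boolean algebra `P(α)/fin` -/
def PFin (α : Type) : Type := Quotient (finSetoid α)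

/-- the class of `X` in `P(α)/fin` -/
def PFin.mk {α : Type} (X : Set α) : PFin α := Quotient.mk (finSetoid α) X

/-- join in `P(α)/fin` -/
def PFin.sup {α : Type} : PFin α → PFin α → PFin α :=
  Quotient.lift₂ (fun X Y => PFin.mk (X ∪ Y))
    (by
      intro X Y X' Y' hX hY
      refine Quotient.sound ?_
      have hX' : (symmDiff X X').Finite := hX
      have hY' : (symmDiff Y Y').Finite := hY
      show (symmDiff (X ∪ Y) (X' ∪ Y')).Finite
      refine (hX'.union hY').subset ?_
      intro x hx
      simp only [Set.mem_symmDiff, Set.mem_union] at hx ⊢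
      tauto)

/-- meet in `P(α)/fin` -/
def PFin.inf {α : Type} : PFin α → PFin α → PFin α :=
  Quotient.lift₂ (fun X Y => PFin.mk (X ∩ Y))
    (by
      intro X Y X' Y' hX hY
      refine Quotient.sound ?_
      have hX' : (symmDiff X X').Finite := hX
      have hY' : (symmDiff Y Y').Finite := hY
      show (symmDiff (X ∩ Y) (X' ∩ Y')).Finite
      refine (hX'.union hY').subset ?_
      intro x hx
      simp only [Set.mem_symmDiff, Set.mem_inter_iff, Set.mem_union] at hx ⊢
      tauto)

/-- complement in `P(α)/fin` -/
def PFin.compl {α : Type} : PFin α → PFin α :=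
  Quotient.lift (fun X => PFin.mk Xᶜ)
    (by
      intro X Y h
      refine Quotient.sound ?_
      have h' : (symmDiff X Y).Finite := h
      show (symmDiff Xᶜ Yᶜ).Finite
      have e : symmDiff Xᶜ Yᶜ = symmDiff X Y := by
        ext x; simp only [Set.mem_symmDiff, Set.mem_compl_iff]; tauto
      rw [e]; exact h')

/-- bottom of `P(α)/fin` -/
def PFin.bot {α : Type} : PFin α := PFin.mk (∅ : Set α)

/-- top of `P(α)/fin` -/
def PFin.top {α : Type} : PFin α := PFin.mk (Set.univ : Set α)

/-- the Cantor set `2^ω` -/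
abbrev Cant : Type := ℕ → Bool

/-- the space `C = ω × 2^ω` -/
abbrev CSp : Type := ℕ × Cant

/-- the cylinder set `[s] = {x : s ⊂ x}` determined by a finite binary sequence -/
def cyl (s : List Bool) : Set Cant := {x | ∀ i : Fin s.length, x i.1 = s.get i}

/-- the basic clopen set `{n} × [s]` of `C` -/
def basic (n : ℕ) (s : List Bool) : Set CSp := {n} ×ˢ cyl s

lemma measurableSet_cyl (s : List Bool) : MeasurableSet (cyl s) := by
  have h : cyl s = ⋂ i : Fin s.length, (fun x : Cant => x i.1) ⁻¹' {s.get i} := by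
    ext x; simp [cyl]
  rw [h]
  exact MeasurableSet.iInter fun i => (measurable_pi_apply i.1) (measurableSet_singleton _)

lemma measurableSet_basic (n : ℕ) (s : List Bool) : MeasurableSet (basic n s) :=
  (measurableSet_singleton n).prod (measurableSet_cyl s)

/-- a measure on `C` is the right one when it gives each basic set `{n} × [s]`
measure `2^{-|s|}` (this determines the measure on all Borel sets). -/
def IsMeasureOK (μ : Measure CSp) : Prop :=
  ∀ (n : ℕ) (s : List Bool), μ (basic n s) = (2 : ℝ≥0∞)⁻¹ ^ s.length

/-- Borel subsets of `C` -/
abbrev BSet : Type := {A : Set CSp // MeasurableSet A}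

/-- the "equal modulo a null set" setoid on Borel sets of `C` -/
def measSetoid (μ : Measure CSp) : Setoid BSet where
  r A B := μ (symmDiff (A : Set CSp) (B : Set CSp)) = 0
  iseqv := by
    constructor
    · intro A; simp
    · intro A B h; rwa [symmDiff_comm]
    · intro A B C h1 h2
      exact measure_mono_null (symmDiff_triangle (A : Set CSp) (B : Set CSp) (C : Set CSp))
        (measure_union_null h1 h2)

/-- the measure algebra `ℳ = Bor(C)/𝒩` -/
def MAlg (μ : Measure CSp) : Type := Quotient (measSetoid μ)

/-- the class of a Borel set in the measure algebra -/
def MAlg.mk (μ : Measure CSp) (A : BSet) : MAlg μ := Quotient.mk (measSetoid μ) A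

variable {μ : Measure CSp}

/-- join in the measure algebra -/
def MAlg.sup : MAlg μ → MAlg μ → MAlg μ :=
  Quotient.lift₂ (fun A B : BSet => MAlg.mk μ ⟨(A : Set CSp) ∪ (B : Set CSp), A.2.union B.2⟩)
    (by
      intro A B A' B' hA hB
      refine Quotient.sound ?_
      have hA' : μ (symmDiff (A : Set CSp) (A' : Set CSp)) = 0 := hA
      have hB' : μ (symmDiff (B : Set CSp) (B' : Set CSp)) = 0 := hB
      show μ (symmDiff ((A : Set CSp) ∪ (B : Set CSp)) ((A' : Set CSp) ∪ (B' : Set CSp))) = 0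
      refine measure_mono_null ?_ (measure_union_null hA' hB')
      intro x hx
      simp only [Set.mem_symmDiff, Set.mem_union] at hx ⊢
      tauto)

/-- meet in the measure algebra -/
def MAlg.inf : MAlg μ → MAlg μ → MAlg μ :=
  Quotient.lift₂ (fun A B : BSet => MAlg.mk μ ⟨(A : Set CSp) ∩ (B : Set CSp), A.2.inter B.2⟩)
    (by
      intro A B A' B' hA hB
      refine Quotient.sound ?_
      have hA' : μ (symmDiff (A : Set CSp) (A' : Set CSp)) = 0 := hA
      have hB' : μ (symmDiff (B : Set CSp) (B' : Set CSp)) = 0 := hB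
      show μ (symmDiff ((A : Set CSp) ∩ (B : Set CSp)) ((A' : Set CSp) ∩ (B' : Set CSp))) = 0
      refine measure_mono_null ?_ (measure_union_null hA' hB')
      intro x hx
      simp only [Set.mem_symmDiff, Set.mem_inter_iff, Set.mem_union] at hx ⊢
      tauto)

/-- complement in the measure algebra -/
def MAlg.compl : MAlg μ → MAlg μ :=
  Quotient.lift (fun A : BSet => MAlg.mk μ ⟨(A : Set CSp)ᶜ, A.2.compl⟩)
    (by
      intro A B h
      refine Quotient.sound ?_
      have h' : μ (symmDiff (A : Set CSp) (B : Set CSp)) = 0 := h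
      show μ (symmDiff (A : Set CSp)ᶜ (B : Set CSp)ᶜ) = 0
      have e : symmDiff (A : Set CSp)ᶜ (B : Set CSp)ᶜ = symmDiff (A : Set CSp) (B : Set CSp) := by
        ext x; simp only [Set.mem_symmDiff, Set.mem_compl_iff]; tauto
      rw [e]; exact h')

/-- bottom of the measure algebra -/
def MAlg.bot : MAlg μ := MAlg.mk μ ⟨∅, MeasurableSet.empty⟩

/-- top of the measure algebra -/
def MAlg.top : MAlg μ := MAlg.mk μ ⟨Set.univ, MeasurableSet.univ⟩

/-- `φ : ℳ → P(ℕ)/fin` is a Boolean-algebra embedding -/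
structure IsEmbedding (μ : Measure CSp) (φ : MAlg μ → PFin ℕ) : Prop where
  injective : Function.Injective φ
  map_sup : ∀ a b, φ (MAlg.sup a b) = PFin.sup (φ a) (φ b)
  map_inf : ∀ a b, φ (MAlg.inf a b) = PFin.inf (φ a) (φ b)
  map_compl : ∀ a, φ (MAlg.compl a) = PFin.compl (φ a)
  map_bot : φ MAlg.bot = PFin.bot
  map_top : φ MAlg.top = PFin.top

/-- the open subset of `C` coded by a set `O` of pairs `(n,s)` -/
def openSet (O : Set (ℕ × List Bool)) : Set CSp := ⋃ p ∈ O, basic p.1 p.2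

lemma measurableSet_openSet (O : Set (ℕ × List Bool)) : MeasurableSet (openSet O) :=
  MeasurableSet.biUnion O.to_countable fun p _ => measurableSet_basic p.1 p.2

/-- the element of the measure algebra coded by `O` -/
def classOf (μ : Measure CSp) (O : Set (ℕ × List Bool)) : MAlg μ :=
  MAlg.mk μ ⟨openSet O, measurableSet_openSet O⟩

/-- `Φ` is a lifting of `φ : ℳ → P(ℕ)/fin`: it chooses a representative of `φ a` for every `a` -/
def IsLifting {μ : Measure CSp} (φ : MAlg μ → PFin ℕ) (Φ : MAlg μ → Set ℕ) : Prop :=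
  ∀ a, PFin.mk (Φ a) = φ a

/-- `Φ(O)`: the value of `Φ` at the class of the open set coded by `O` -/
def PhiSet {μ : Measure CSp} (Φ : MAlg μ → Set ℕ) (O : Set (ℕ × List Bool)) : Set ℕ :=
  Φ (classOf μ O)

/-- `Φ(n,s)` -/
def PhiPt {μ : Measure CSp} (Φ : MAlg μ → Set ℕ) (n : ℕ) (s : List Bool) : Set ℕ :=
  Φ (classOf μ {(n, s)})

/-- `Φ[O] = ⋃ {Φ(n,s) : (n,s) ∈ O}` -/
def PhiUnion {μ : Measure CSp} (Φ : MAlg μ → Set ℕ) (O : Set (ℕ × List Bool)) : Set ℕ :=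
  ⋃ p ∈ O, PhiPt Φ p.1 p.2

/-- the layer `B_f = {(n,s) : s ∈ 2^{f(n)}}` -/
def Bf (f : ℕ → ℕ) : Set (ℕ × List Bool) := {p | p.2.length = f p.1}

/-- the layer `B_{f,A} = {(n,s) : n ∈ A, s ∈ 2^{f(n)}}` -/
def BfA (f : ℕ → ℕ) (A : Set ℕ) : Set (ℕ × List Bool) := {p | p.1 ∈ A ∧ p.2.length = f p.1}

/-- `Φ` is an exact lifting: the sets `Φ(n,∅)` partition `ℕ` and each `Φ(n,s)` is the
disjoint union of `Φ(n,s⌢0)` and `Φ(n,s⌢1)`. -/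
def IsExact {μ : Measure CSp} (Φ : MAlg μ → Set ℕ) : Prop :=
  (∀ n m : ℕ, n ≠ m → Disjoint (PhiPt Φ n []) (PhiPt Φ m [])) ∧
  (⋃ n : ℕ, PhiPt Φ n []) = Set.univ ∧
  ∀ (n : ℕ) (s : List Bool),
    PhiPt Φ n s = PhiPt Φ n (s ++ [false]) ∪ PhiPt Φ n (s ++ [true]) ∧
    Disjoint (PhiPt Φ n (s ++ [false])) (PhiPt Φ n (s ++ [true]))

/-- `Φ` is a complete lifting: `Φ(O) =* Φ[O]` for every `f` and every `O ⊆ B_f`. -/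
def IsComplete {μ : Measure CSp} (Φ : MAlg μ → Set ℕ) : Prop :=
  ∀ f : ℕ → ℕ, ∀ O ⊆ Bf f, AlmostEq (PhiSet Φ O) (PhiUnion Φ O)


/-! ### Auxiliary lemmas for Statement 4 -/

section Aux

variable {μ : Measure CSp}

lemma lift_inter_finite (φ : MAlg μ → PFin ℕ) (hφ : IsEmbedding μ φ)
    (Φ : MAlg μ → Set ℕ) (hΦ : IsLifting φ Φ) {a b : MAlg μ}
    (h : MAlg.inf a b = MAlg.bot) : (Φ a ∩ Φ b).Finite := by
  have h1 : PFin.inf (PFin.mk (Φ a)) (PFin.mk (Φ b)) = PFin.bot := by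
    rw [hΦ a, hΦ b, ← hφ.map_inf, h, hφ.map_bot]
  have h2 : PFin.mk (Φ a ∩ Φ b) = PFin.mk (∅ : Set ℕ) := h1
  have h3 : (symmDiff (Φ a ∩ Φ b) (∅ : Set ℕ)).Finite := Quotient.exact h2
  simpa [Set.symmDiff_def] using h3

lemma lift_compl_finite (φ : MAlg μ → PFin ℕ) (hφ : IsEmbedding μ φ)
    (Φ : MAlg μ → Set ℕ) (hΦ : IsLifting φ Φ) (a : MAlg μ) :
    (symmDiff (Φ (MAlg.compl a)) ((Φ a)ᶜ)).Finite := by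
  have h1 : PFin.mk (Φ (MAlg.compl a)) = PFin.mk ((Φ a)ᶜ) := by
    rw [hΦ (MAlg.compl a), hφ.map_compl, ← hΦ a]; rfl
  exact Quotient.exact h1

lemma lift_infinite (φ : MAlg μ → PFin ℕ) (hφ : IsEmbedding μ φ)
    (Φ : MAlg μ → Set ℕ) (hΦ : IsLifting φ Φ) {a : MAlg μ}
    (ha : a ≠ MAlg.bot) : (Φ a).Infinite := by
  by_contra hfin
  rw [Set.not_infinite] at hfin
  have h1 : PFin.mk (Φ a) = PFin.mk (∅ : Set ℕ) :=
    Quotient.sound (show (symmDiff (Φ a) (∅ : Set ℕ)).Finite by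
      simpa [Set.symmDiff_def] using hfin)
  have h2 : φ a = φ MAlg.bot := by
    rw [← hΦ a, hφ.map_bot]; exact h1
  exact ha (hφ.injective h2)

open Classical in
/-- the branch of `i` in column `n`: a sequence of sets `Φ(n,s)` containing `i`. -/
noncomputable def branchSeq (Φ : MAlg μ → Set ℕ) (n i : ℕ) : ℕ → List Bool
  | 0 => []
  | k+1 =>
      if i ∈ PhiPt Φ n (branchSeq Φ n i k ++ [false]) then branchSeq Φ n i k ++ [false]
      else branchSeq Φ n i k ++ [true]

lemma branchSeq_length (Φ : MAlg μ → Set ℕ) (n i : ℕ) :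
    ∀ k, (branchSeq Φ n i k).length = k := by
  intro k
  induction k with
  | zero => rfl
  | succ k ih =>
      rw [branchSeq]
      split_ifs <;> simp [ih]

lemma branchSeq_mem {Φ : MAlg μ → Set ℕ} (hexact : IsExact Φ) {n i : ℕ}
    (hi : i ∈ PhiPt Φ n []) : ∀ k, i ∈ PhiPt Φ n (branchSeq Φ n i k) := by
  intro k
  induction k with
  | zero => exact hi
  | succ k ih =>
      rw [branchSeq]
      split_ifs with h
      · exact h
      · have hs := (hexact.2.2 n (branchSeq Φ n i k)).1
        rw [hs] at ih
        rcases ih with h' | h'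
        · exact absurd h' h
        · exact h'

lemma phiPt_subset_nil {Φ : MAlg μ → Set ℕ} (hexact : IsExact Φ) (n : ℕ) :
    ∀ s : List Bool, PhiPt Φ n s ⊆ PhiPt Φ n [] := by
  intro s
  induction s using List.reverseRecOn with
  | nil => exact fun x hx => hx
  | append_singleton s b ih =>
      intro x hx
      apply ih
      rw [(hexact.2.2 n s).1]
      cases b
      · exact Set.mem_union_left _ hx
      · exact Set.mem_union_right _ hx

lemma col_infinite (hOK : IsMeasureOK μ) (φ : MAlg μ → PFin ℕ) (hφ : IsEmbedding μ φ)
    (Φ : MAlg μ → Set ℕ) (hΦ : IsLifting φ Φ) (n : ℕ) :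
    (PhiPt Φ n []).Infinite := by
  apply lift_infinite φ hφ Φ hΦ
  intro hbot
  have h2 : μ (symmDiff (openSet ({(n, [])} : Set (ℕ × List Bool))) (∅ : Set CSp)) = 0 :=
    Quotient.exact hbot
  have h3 : μ (openSet ({(n, [])} : Set (ℕ × List Bool))) = 0 := by
    simpa [Set.symmDiff_def] using h2
  have h4 : openSet ({(n, [])} : Set (ℕ × List Bool)) = basic n [] :=
    Set.biUnion_singleton _ _
  rw [h4, hOK n []] at h3
  simp at h3

end Aux

section Main

lemma exists_bad_graph
    (μ : Measure CSp) (hOK : IsMeasureOK μ)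
    (φ : MAlg μ → PFin ℕ) (hφ : IsEmbedding μ φ)
    (Φ : MAlg μ → Set ℕ) (hΦ : IsLifting φ Φ) (hexact : IsExact Φ) :
    ∃ t : ℕ → List Bool,
        ¬ AlmostEq (PhiSet Φ (Set.range fun n => (n, t n)))
          (PhiUnion Φ (Set.range fun n => (n, t n))) := by
  classical
  by_contra hcon
  push_neg at hcon
  -- `hcon : ∀ t, AlmostEq (PhiSet Φ (range (n, t n))) (PhiUnion Φ (range (n, t n)))`
  -- enumerate each column
  have hg : ∀ n : ℕ, ∃ g : ℕ → ℕ, PhiPt Φ n [] = Set.range g := fun n =>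
    (Set.to_countable _).exists_eq_range (col_infinite hOK φ hφ Φ hΦ n).nonempty
  choose g hgspec using hg
  -- the covering prefixes
  set sgn : ℕ → ℕ → List Bool := fun n j => branchSeq Φ n (g n j) (j + 2) with hsgn
  have hglen : ∀ n j, (sgn n j).length = j + 2 := fun n j => branchSeq_length Φ n (g n j) (j + 2)
  have hgmem : ∀ n j, g n j ∈ PhiPt Φ n (sgn n j) := by
    intro n j
    exact branchSeq_mem hexact (by rw [hgspec n]; exact ⟨j, rfl⟩) (j + 2)
  have hcover : ∀ n i, i ∈ PhiPt Φ n [] → ∃ j, i ∈ PhiPt Φ n (sgn n j) := by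
    intro n i hi
    have hr : i ∈ Set.range (g n) := (hgspec n) ▸ hi
    obtain ⟨j, hj⟩ := hr
    subst hj
    exact ⟨j, hgmem n j⟩
  set OE : Set (ℕ × List Bool) := Set.range (fun q : ℕ × ℕ => (q.1, sgn q.1 q.2)) with hOE
  set d : MAlg μ := classOf μ OE with hd
  set Y : Set ℕ := Φ (MAlg.compl d) with hY
  -- Step A : any covering graph has union almost disjoint from Y
  have stepA : ∀ t : ℕ → List Bool, (∀ n, ∃ j, t n = sgn n j) →
      (PhiUnion Φ (Set.range fun n => (n, t n)) ∩ Y).Finite := by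
    intro t ht
    have hsub : openSet (Set.range fun n => (n, t n)) ⊆ openSet OE := by
      intro x hx
      simp only [openSet, Set.mem_iUnion, Set.mem_range, exists_prop] at hx ⊢
      obtain ⟨p, ⟨n, hp⟩, hxp⟩ := hx
      obtain ⟨j, hj⟩ := ht n
      refine ⟨(n, sgn n j), ⟨⟨(n, j), rfl⟩, ?_⟩⟩
      rw [← hp] at hxp
      rw [hj] at hxp
      exact hxp
    have hbot : MAlg.inf (classOf μ (Set.range fun n => (n, t n))) (MAlg.compl d) = MAlg.bot := by
      apply Quotient.sound
      show μ (symmDiff (openSet (Set.range fun n => (n, t n)) ∩ (openSet OE)ᶜ) (∅ : Set CSp)) = 0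
      have he : openSet (Set.range fun n => (n, t n)) ∩ (openSet OE)ᶜ = ∅ := by
        rw [Set.eq_empty_iff_forall_notMem]
        rintro x ⟨h1, h2⟩
        exact h2 (hsub h1)
      rw [he]
      simp [Set.symmDiff_def]
    have h1 : (PhiSet Φ (Set.range fun n => (n, t n)) ∩ Y).Finite :=
      lift_inter_finite φ hφ Φ hΦ hbot
    have h2 : (symmDiff (PhiSet Φ (Set.range fun n => (n, t n)))
        (PhiUnion Φ (Set.range fun n => (n, t n)))).Finite := hcon t
    refine (h1.union h2).subset ?_
    rintro x ⟨hxu, hxy⟩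
    by_cases hxs : x ∈ PhiSet Φ (Set.range fun n => (n, t n))
    · exact Or.inl ⟨hxs, hxy⟩
    · exact Or.inr (Set.mem_symmDiff.mpr (Or.inr ⟨hxu, hxs⟩))
  -- Step B : the set of bad columns is finite
  set Bad : Set ℕ := {n | ∃ j, (PhiPt Φ n (sgn n j) ∩ Y).Nonempty} with hBadDef
  have hBadFin : Bad.Finite := by
    by_contra hInf
    set t : ℕ → List Bool := fun n => if h : n ∈ Bad then sgn n h.choose else sgn n 0 with htdef
    have htprop : ∀ n, ∃ j, t n = sgn n j := by
      intro n
      by_cases h : n ∈ Bad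
      · exact ⟨h.choose, by simp only [htdef]; rw [dif_pos h]⟩
      · exact ⟨0, by simp only [htdef]; rw [dif_neg h]⟩
    set P : ℕ → ℕ := fun n => if h : n ∈ Bad then h.choose_spec.choose else 0 with hPdef
    have hPmem : ∀ n, n ∈ Bad → P n ∈ PhiPt Φ n (t n) ∩ Y := by
      intro n h
      have hspec := h.choose_spec.choose_spec
      simp only [hPdef, htdef]
      rw [dif_pos h, dif_pos h]
      exact hspec
    have hfin := stepA t htprop
    have himg : P '' Bad ⊆ PhiUnion Φ (Set.range fun n => (n, t n)) ∩ Y := by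
      rintro x ⟨n, hn, rfl⟩
      obtain ⟨h1, h2⟩ := hPmem n hn
      exact ⟨Set.mem_biUnion ⟨n, rfl⟩ h1, h2⟩
    have hinj : Set.InjOn P Bad := by
      intro n hn m hm hnm
      by_contra hne
      have h1 : P n ∈ PhiPt Φ n [] := phiPt_subset_nil hexact n (t n) (hPmem n hn).1
      have h2 : P m ∈ PhiPt Φ m [] := phiPt_subset_nil hexact m (t m) (hPmem m hm).1
      rw [hnm] at h1
      exact Set.disjoint_left.mp (hexact.1 n m hne) h1 h2
    exact hInf (Set.Finite.of_finite_image (hfin.subset himg) hinj)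
  obtain ⟨n₀, hn₀⟩ : ∃ n₀, n₀ ∉ Bad := by
    by_contra h
    push_neg at h
    have huniv : (Set.univ : Set ℕ) = Bad := (Set.eq_univ_of_forall h).symm
    exact Set.infinite_univ (huniv ▸ hBadFin)
  -- Step C : Y misses column n₀ entirely
  have hYcol : ∀ i, i ∈ PhiPt Φ n₀ [] → i ∉ Y := by
    intro i hi hiY
    obtain ⟨j, hj⟩ := hcover n₀ i hi
    exact hn₀ ⟨j, ⟨i, hj, hiY⟩⟩
  -- Step D : the fat complement in column n₀
  have hcyl0 : cyl ([] : List Bool) = Set.univ := by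
    refine Set.eq_univ_of_forall fun x => ?_
    intro i
    exact absurd i.isLt (by simp)
  set En : Set Cant := ⋃ j, cyl (sgn n₀ j) with hEnDef
  have hEnMeas : MeasurableSet En := MeasurableSet.iUnion fun j => measurableSet_cyl _
  set Xe : Set CSp := ({n₀} : Set ℕ) ×ˢ Enᶜ with hXeDef
  have hXeMeas : MeasurableSet Xe := (measurableSet_singleton n₀).prod hEnMeas.compl
  set e : MAlg μ := MAlg.mk μ ⟨Xe, hXeMeas⟩ with heDef
  -- the measure of Xe is at least 1/2
  have hsum : ∑' j : ℕ, (2⁻¹ : ℝ≥0∞) ^ (j + 2) = 2⁻¹ := by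
    have h1 : ∀ j : ℕ, (2⁻¹ : ℝ≥0∞) ^ (j + 2) = (2⁻¹ : ℝ≥0∞) ^ j * (2⁻¹ : ℝ≥0∞) ^ 2 :=
      fun j => pow_add _ _ _
    rw [tsum_congr h1, ENNReal.tsum_mul_right, ENNReal.tsum_geometric,
      ENNReal.one_sub_inv_two, inv_inv, sq, ← mul_assoc,
      ENNReal.mul_inv_cancel two_ne_zero ENNReal.ofNat_ne_top, one_mul]
  have hμXe : μ Xe ≠ 0 := by
    intro h0
    have hsub : basic n₀ [] ⊆ Xe ∪ (({n₀} : Set ℕ) ×ˢ En) := by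
      rintro ⟨m, x⟩ ⟨hm, -⟩
      by_cases hx : x ∈ En
      · exact Or.inr ⟨hm, hx⟩
      · exact Or.inl ⟨hm, hx⟩
    have h2 : μ (({n₀} : Set ℕ) ×ˢ En) ≤ 2⁻¹ := by
      rw [hEnDef, Set.prod_iUnion]
      refine le_trans (measure_iUnion_le _) ?_
      have hval : ∀ j : ℕ, μ (({n₀} : Set ℕ) ×ˢ cyl (sgn n₀ j)) = (2⁻¹ : ℝ≥0∞) ^ (j + 2) := by
        intro j
        have := hOK n₀ (sgn n₀ j)
        rw [hglen n₀ j] at this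
        exact this
      rw [tsum_congr hval, hsum]
    have hone : μ (basic n₀ []) = 1 := by rw [hOK n₀ []]; simp
    have h1 : (1 : ℝ≥0∞) ≤ μ Xe + 2⁻¹ :=
      calc (1 : ℝ≥0∞) = μ (basic n₀ []) := hone.symm
        _ ≤ μ (Xe ∪ (({n₀} : Set ℕ) ×ˢ En)) := measure_mono hsub
        _ ≤ μ Xe + μ (({n₀} : Set ℕ) ×ˢ En) := measure_union_le _ _
        _ ≤ μ Xe + 2⁻¹ := add_le_add le_rfl h2
    rw [h0, zero_add] at h1
    exact absurd h1 (not_le.mpr (ENNReal.inv_lt_one.mpr ENNReal.one_lt_two))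
  have hene : e ≠ MAlg.bot := by
    intro h
    have h2 : μ (symmDiff Xe (∅ : Set CSp)) = 0 := Quotient.exact h
    apply hμXe
    simpa [Set.symmDiff_def] using h2
  have heInf : (Φ e).Infinite := lift_infinite φ hφ Φ hΦ hene
  -- e is disjoint from d
  have hed : MAlg.inf e d = MAlg.bot := by
    apply Quotient.sound
    show μ (symmDiff (Xe ∩ openSet OE) (∅ : Set CSp)) = 0
    have hXE : Xe ∩ openSet OE = ∅ := by
      rw [Set.eq_empty_iff_forall_notMem]
      rintro ⟨m, x⟩ ⟨⟨hm, hx⟩, hopen⟩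
      simp only [openSet, Set.mem_iUnion, Set.mem_range, exists_prop] at hopen
      obtain ⟨p, ⟨q, hq⟩, hp⟩ := hopen
      rw [← hq] at hp
      obtain ⟨hp1, hp2⟩ := hp
      have hp1' : m = q.1 := hp1
      have hp2' : x ∈ cyl (sgn q.1 q.2) := hp2
      have hm' : m = n₀ := hm
      apply hx
      rw [show q.1 = n₀ from by rw [← hp1', hm']] at hp2'
      exact Set.mem_iUnion.mpr ⟨q.2, hp2'⟩
    rw [hXE]
    simp [Set.symmDiff_def]
  have hfin1 : (Φ e ∩ Φ d).Finite := lift_inter_finite φ hφ Φ hΦ hed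
  have hfin2 : (symmDiff Y ((Φ d)ᶜ)).Finite := lift_compl_finite φ hφ Φ hΦ d
  have hfinA : (Φ e \ Y).Finite := by
    refine (hfin1.union hfin2).subset ?_
    rintro x ⟨hxe, hxy⟩
    by_cases hxd : x ∈ Φ d
    · exact Or.inl ⟨hxe, hxd⟩
    · exact Or.inr (Set.mem_symmDiff.mpr (Or.inr ⟨hxd, hxy⟩))
  -- e is inside column n₀
  set cc : MAlg μ := classOf μ ({(n₀, [])} : Set (ℕ × List Bool)) with hccDef
  have hecc : MAlg.inf e (MAlg.compl cc) = MAlg.bot := by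
    apply Quotient.sound
    show μ (symmDiff (Xe ∩ (openSet ({(n₀, [])} : Set (ℕ × List Bool)))ᶜ) (∅ : Set CSp)) = 0
    have hXE : Xe ∩ (openSet ({(n₀, [])} : Set (ℕ × List Bool)))ᶜ = ∅ := by
      rw [Set.eq_empty_iff_forall_notMem]
      rintro ⟨m, x⟩ ⟨⟨hm, -⟩, hni⟩
      apply hni
      have hbase : (m, x) ∈ basic n₀ [] := ⟨hm, by rw [hcyl0]; trivial⟩
      exact Set.mem_biUnion rfl hbase
    rw [hXE]
    simp [Set.symmDiff_def]
  have hfin3 : (Φ e ∩ Φ (MAlg.compl cc)).Finite := lift_inter_finite φ hφ Φ hΦ hecc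
  have hfin4 : (symmDiff (Φ (MAlg.compl cc)) ((Φ cc)ᶜ)).Finite := lift_compl_finite φ hφ Φ hΦ cc
  have hfinB : (Φ e \ PhiPt Φ n₀ []).Finite := by
    refine (hfin3.union hfin4).subset ?_
    rintro x ⟨hxe, hxc⟩
    by_cases hxcc : x ∈ Φ (MAlg.compl cc)
    · exact Or.inl ⟨hxe, hxcc⟩
    · exact Or.inr (Set.mem_symmDiff.mpr (Or.inr ⟨hxc, hxcc⟩))
  -- contradiction
  apply heInf
  have hsub : Φ e ⊆ (Φ e \ Y) ∪ (Φ e \ PhiPt Φ n₀ []) := by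
    intro x hx
    by_cases hxY : x ∈ Y
    · by_cases hxc : x ∈ PhiPt Φ n₀ []
      · exact absurd hxY (hYcol x hxc)
      · exact Or.inr ⟨hx, hxc⟩
    · exact Or.inl ⟨hx, hxY⟩
  exact (hfinA.union hfinB).subset hsub

end Main
/-- for every exact lifting `Φ` of an embedding `φ : ℳ → P(ℕ)/fin` there is a
sequence `⟨t_n : n ∈ ω⟩` in `2^{<ω}` such that for `O = {(n,t_n) : n ∈ ω}` we have
`Φ(O) ≠* Φ[O]`; consequently no exact lifting is complete. -/
theorem no_exact_lifting_is_complete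
    (μ : Measure CSp) (hμ : IsMeasureOK μ)
    (φ : MAlg μ → PFin ℕ) (hφ : IsEmbedding μ φ)
    (Φ : MAlg μ → Set ℕ) (hΦ : IsLifting φ Φ) (hexact : IsExact Φ) :
    (∃ t : ℕ → List Bool,
        ¬ AlmostEq (PhiSet Φ (Set.range fun n => (n, t n)))
          (PhiUnion Φ (Set.range fun n => (n, t n)))) ∧
    ¬ IsComplete Φ := by
  obtain ⟨t, hbad⟩ := exists_bad_graph μ hμ φ hφ Φ hΦ hexact
  refine ⟨⟨t, hbad⟩, fun hcomp => hbad ?_⟩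
  exact hcomp (fun n => (t n).length) (Set.range fun n => (n, t n))
    (by rintro p ⟨n, rfl⟩; exact rfl)

end Paper
end

section
/- Let φ : ℳ → P(ℕ)/fin be a Boolean-algebra embedding, A ⊆ ℕ, and f, g ∈ ω^ω with f ≤* g. If there is a lifting Φ_g of φ such that Φ_g(O) = Φ_g[O] for all O ⊆ B_{g,A} and Φ_g(n,s) ∩ Φ_g(m,t) = ∅ whenever the basic sets {n} × [s] and {m} × [t] are disjoint, then there is a lifting Φ_f of φ such that Φ_f(O) = Φ_f[O] for all O ⊆ B_{f,A} and Φ_f(n,s) ∩ Φ_f(m,t) = ∅ whenever {n} × [s] and {m} × [t] are disjoint. -/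
open Set MeasureTheory
open scoped ENNReal

namespace Paper

variable {μ : Measure CSp}

section Aux
variable {μ : Measure CSp}

lemma openSet_singleton (p : ℕ × List Bool) : openSet {p} = basic p.1 p.2 := by
  simp [openSet]

lemma openSet_empty : openSet (∅ : Set (ℕ × List Bool)) = ∅ := by simp [openSet]

lemma openSet_union (O₁ O₂ : Set (ℕ × List Bool)) :
    openSet (O₁ ∪ O₂) = openSet O₁ ∪ openSet O₂ := Set.biUnion_union O₁ O₂ _

lemma openSet_insert (p : ℕ × List Bool) (O : Set (ℕ × List Bool)) :
    openSet (insert p O) = basic p.1 p.2 ∪ openSet O := Set.biUnion_insert p O _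

lemma basic_subset_openSet {p : ℕ × List Bool} {O : Set (ℕ × List Bool)} (hp : p ∈ O) :
    basic p.1 p.2 ⊆ openSet O :=
  Set.subset_biUnion_of_mem (u := fun q : ℕ × List Bool => basic q.1 q.2) hp

lemma classOf_congr {O₁ O₂ : Set (ℕ × List Bool)} (h : openSet O₁ = openSet O₂) :
    classOf μ O₁ = classOf μ O₂ := by
  unfold classOf; congr 1; exact Subtype.ext h

lemma classOf_union (O₁ O₂ : Set (ℕ × List Bool)) :
    classOf μ (O₁ ∪ O₂) = MAlg.sup (classOf μ O₁) (classOf μ O₂) :=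
  congrArg (MAlg.mk μ) (Subtype.ext (openSet_union O₁ O₂))

lemma classOf_empty : classOf μ (∅ : Set (ℕ × List Bool)) = MAlg.bot :=
  congrArg (MAlg.mk μ) (Subtype.ext openSet_empty)

lemma classOf_exact {O₁ O₂ : Set (ℕ × List Bool)} (h : classOf μ O₁ = classOf μ O₂) :
    μ (symmDiff (openSet O₁) (openSet O₂)) = 0 := Quotient.exact h

lemma PFin.mk_union {α : Type} (X Y : Set α) :
    PFin.mk (X ∪ Y) = PFin.sup (PFin.mk X) (PFin.mk Y) := rfl

lemma PhiUnion_singleton (Φ : MAlg μ → Set ℕ) (p : ℕ × List Bool) :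
    PhiUnion Φ {p} = PhiPt Φ p.1 p.2 := by simp [PhiUnion]

lemma PhiUnion_empty (Φ : MAlg μ → Set ℕ) : PhiUnion Φ (∅ : Set (ℕ × List Bool)) = ∅ := by
  simp [PhiUnion]

lemma PhiUnion_union (Φ : MAlg μ → Set ℕ) (O₁ O₂ : Set (ℕ × List Bool)) :
    PhiUnion Φ (O₁ ∪ O₂) = PhiUnion Φ O₁ ∪ PhiUnion Φ O₂ := Set.biUnion_union O₁ O₂ _

lemma PhiUnion_insert (Φ : MAlg μ → Set ℕ) (p : ℕ × List Bool) (O : Set (ℕ × List Bool)) :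
    PhiUnion Φ (insert p O) = PhiPt Φ p.1 p.2 ∪ PhiUnion Φ O := Set.biUnion_insert p O _

lemma basic_ne_zero (hμ : IsMeasureOK μ) (n : ℕ) (s : List Bool) : μ (basic n s) ≠ 0 := by
  rw [hμ]
  exact pow_ne_zero _ (ENNReal.inv_ne_zero.mpr (by norm_num))

lemma mem_basic {n : ℕ} {s : List Bool} {x : CSp} :
    x ∈ basic n s ↔ x.1 = n ∧ ∀ i : Fin s.length, x.2 i.1 = s.get i := Iff.rfl

lemma cyl_disj {s t : List Bool} {i : ℕ} (h1 : i < s.length) (h2 : i < t.length)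
    (hne : s.get ⟨i, h1⟩ ≠ t.get ⟨i, h2⟩) : cyl s ∩ cyl t = ∅ := by
  ext x
  simp only [Set.mem_inter_iff, Set.mem_empty_iff_false, iff_false, not_and]
  intro hs ht
  exact hne (by rw [← hs ⟨i, h1⟩, ← ht ⟨i, h2⟩])

lemma basic_disj_fst {n m : ℕ} {s t : List Bool} (h : n ≠ m) :
    basic n s ∩ basic m t = ∅ := by
  ext x
  simp only [Set.mem_inter_iff, Set.mem_empty_iff_false, iff_false, not_and]
  intro hs ht
  exact absurd (hs.1.symm.trans ht.1) h

lemma basic_disj_cyl {n m : ℕ} {s t : List Bool} (h : cyl s ∩ cyl t = ∅) :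
    basic n s ∩ basic m t = ∅ := by
  ext x
  simp only [Set.mem_inter_iff, Set.mem_empty_iff_false, iff_false, not_and]
  intro hs ht
  exact (Set.eq_empty_iff_forall_notMem.mp h x.2) ⟨hs.2, ht.2⟩

/-- dichotomy for intersections of basic sets -/
lemma basic_inter_cases (n : ℕ) (s : List Bool) (m : ℕ) (t : List Bool) :
    basic n s ∩ basic m t = ∅ ∨ basic n s ∩ basic m t = basic n s ∨
      basic n s ∩ basic m t = basic m t := by
  by_cases hnm : n = m
  · subst hnm
    rcases le_total s.length t.length with hle | hle
    · by_cases hagree : ∀ i (h : i < s.length), s.get ⟨i, h⟩ = t.get ⟨i, lt_of_lt_of_le h hle⟩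
      · right; right
        apply Set.inter_eq_right.mpr
        rintro ⟨k, x⟩ ⟨hk, hx⟩
        refine ⟨hk, fun i => ?_⟩
        rw [hagree i.1 i.2]
        exact hx ⟨i.1, lt_of_lt_of_le i.2 hle⟩
      · left
        push_neg at hagree
        obtain ⟨i, hi, hne⟩ := hagree
        exact basic_disj_cyl (cyl_disj hi (lt_of_lt_of_le hi hle) hne)
    · by_cases hagree : ∀ i (h : i < t.length), t.get ⟨i, h⟩ = s.get ⟨i, lt_of_lt_of_le h hle⟩
      · right; left
        apply Set.inter_eq_left.mpr
        rintro ⟨k, x⟩ ⟨hk, hx⟩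
        refine ⟨hk, fun i => ?_⟩
        rw [hagree i.1 i.2]
        exact hx ⟨i.1, lt_of_lt_of_le i.2 hle⟩
      · left
        push_neg at hagree
        obtain ⟨i, hi, hne⟩ := hagree
        exact basic_disj_cyl (cyl_disj (lt_of_lt_of_le hi hle) hi (Ne.symm hne))
  · exact Or.inl (basic_disj_fst hnm)

lemma basic_inter_empty_of_null (hμ : IsMeasureOK μ) {n : ℕ} {s : List Bool} {m : ℕ}
    {t : List Bool} (h : μ (basic n s ∩ basic m t) = 0) : basic n s ∩ basic m t = ∅ := by
  rcases basic_inter_cases n s m t with h0 | h1 | h1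
  · exact h0
  · rw [h1] at h; exact absurd h (basic_ne_zero hμ n s)
  · rw [h1] at h; exact absurd h (basic_ne_zero hμ m t)

/-- distinct basic sets on the same layer are disjoint -/
lemma basic_disj {f : ℕ → ℕ} {p q : ℕ × List Bool} (hp : p.2.length = f p.1)
    (hq : q.2.length = f q.1) (hne : p ≠ q) : basic p.1 p.2 ∩ basic q.1 q.2 = ∅ := by
  by_cases h1 : p.1 = q.1
  · have hlen : p.2.length = q.2.length := by rw [hp, hq, h1]
    have h2 : p.2 ≠ q.2 := fun h => hne (Prod.ext h1 h)
    have : ¬ ∀ (i : ℕ) (h1 : i < p.2.length) (h2 : i < q.2.length), p.2[i] = q.2[i] := by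
      intro hall
      exact h2 (List.ext_getElem hlen hall)
    push_neg at this
    obtain ⟨i, hi1, hi2, hne'⟩ := this
    exact basic_disj_cyl (cyl_disj hi1 hi2 hne')
  · exact basic_disj_fst h1

/-- the refinement of `O` from level `f` to level `g` -/
def Ref (f g : ℕ → ℕ) (O : Set (ℕ × List Bool)) : Set (ℕ × List Bool) :=
  {q | q.2.length = g q.1 ∧ (q.1, q.2.take (f q.1)) ∈ O}

lemma Ref_subset_BfA {f g : ℕ → ℕ} {A : Set ℕ} {O : Set (ℕ × List Bool)}
    (hO : O ⊆ BfA f A) : Ref f g O ⊆ BfA g A := fun q hq => ⟨(hO hq.2).1, hq.1⟩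

lemma Ref_biUnion (f g : ℕ → ℕ) (O : Set (ℕ × List Bool)) :
    Ref f g O = ⋃ p ∈ O, Ref f g {p} := by
  ext q
  simp only [Ref, Set.mem_setOf_eq, Set.mem_iUnion, Set.mem_singleton_iff]
  constructor
  · rintro ⟨h1, h2⟩; exact ⟨_, h2, h1, rfl⟩
  · rintro ⟨p, hp, h1, h2⟩; exact ⟨h1, h2 ▸ hp⟩

lemma PhiUnion_biUnion {μ : Measure CSp} (Φ : MAlg μ → Set ℕ) {ι : Type}
    (I : Set ι) (K : ι → Set (ℕ × List Bool)) :
    PhiUnion Φ (⋃ i ∈ I, K i) = ⋃ i ∈ I, PhiUnion Φ (K i) := by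
  ext k
  simp only [PhiUnion, Set.mem_iUnion]
  tauto

lemma openSet_Ref {f g : ℕ → ℕ} {O : Set (ℕ × List Bool)}
    (hO : ∀ p ∈ O, p.2.length = f p.1) (hle : ∀ p ∈ O, f p.1 ≤ g p.1) :
    openSet (Ref f g O) = openSet O := by
  apply Set.Subset.antisymm
  · refine Set.iUnion₂_subset fun q hq => ?_
    refine Set.Subset.trans ?_ (basic_subset_openSet hq.2)
    rintro ⟨k, x⟩ ⟨hk, hx⟩
    refine ⟨hk, fun i => ?_⟩
    have hi : i.1 < q.2.length := lt_of_lt_of_le i.2 (List.length_take_le' _ _)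
    have := hx ⟨i.1, hi⟩
    simp only [List.get_eq_getElem] at this ⊢
    rw [List.getElem_take]
    exact this
  · refine Set.iUnion₂_subset fun p hp => ?_
    rintro ⟨k, x⟩ ⟨hk, hx⟩
    have hk' : k = p.1 := hk
    have hlen : p.2.length = f p.1 := hO p hp
    have hfle : f p.1 ≤ g p.1 := hle p hp
    set t : List Bool := List.ofFn (fun i : Fin (g p.1) => x i.1) with ht
    have htlen : t.length = g p.1 := by simp [ht]
    have htake : t.take (f p.1) = p.2 := by
      apply List.ext_getElem
      · simp [List.length_take, htlen, hlen, Nat.min_eq_left hfle]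
      · intro i h1 h2
        rw [List.getElem_take]
        have hi : i < t.length := htlen ▸ lt_of_lt_of_le (hlen ▸ h2) hfle
        have : t[i]'hi = x i := by simp [ht]
        rw [this]
        have := hx ⟨i, by rw [hlen] at h2 ⊢; exact lt_of_lt_of_le h2 le_rfl⟩
        simpa [List.get_eq_getElem] using this
    have hq : (p.1, t) ∈ Ref f g O := by
      refine ⟨by simpa using htlen, ?_⟩
      simpa [htake] using hp
    refine Set.mem_biUnion hq ⟨hk', fun i => ?_⟩
    simp only [List.get_eq_getElem]
    have : i.1 < g p.1 := by rw [← htlen]; exact i.2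
    simp [ht]

lemma finite_length_eq (k : ℕ) : {s : List Bool | s.length = k}.Finite := by
  apply (Set.finite_range (fun v : Fin k → Bool => List.ofFn v)).subset
  intro s hs
  have hs' : s.length = k := hs
  refine ⟨fun i => s[i.1]'(hs' ▸ i.2), ?_⟩
  apply List.ext_getElem (by simp [hs'])
  intro i h1 h2
  simp

lemma classOf_injOn (hμ : IsMeasureOK μ) {f : ℕ → ℕ} {A : Set ℕ} {O₁ O₂ : Set (ℕ × List Bool)}
    (h1 : O₁ ⊆ BfA f A) (h2 : O₂ ⊆ BfA f A) (h : classOf μ O₁ = classOf μ O₂) : O₁ = O₂ := by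
  have half : ∀ P Q : Set (ℕ × List Bool), P ⊆ BfA f A → Q ⊆ BfA f A →
      classOf μ P = classOf μ Q → P ⊆ Q := by
    intro P Q hP hQ hc p hp
    by_contra hpq
    have hdisjq : basic p.1 p.2 ∩ openSet Q = ∅ := by
      apply Set.eq_empty_iff_forall_notMem.mpr
      rintro x ⟨hx1, hx2⟩
      simp only [openSet, Set.mem_iUnion] at hx2
      obtain ⟨q, hq, hxq⟩ := hx2
      have hne : p ≠ q := fun e => hpq (by rw [e]; exact hq)
      have hd : basic p.1 p.2 ∩ basic q.1 q.2 = ∅ :=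
        basic_disj (f := f) (hP hp).2 (hQ hq).2 hne
      exact Set.eq_empty_iff_forall_notMem.mp hd x ⟨hx1, hxq⟩
    have hsub : basic p.1 p.2 ⊆ symmDiff (openSet P) (openSet Q) := by
      intro x hx
      refine Set.mem_symmDiff.mpr (Or.inl ⟨basic_subset_openSet hp hx, fun hxQ => ?_⟩)
      exact Set.eq_empty_iff_forall_notMem.mp hdisjq x ⟨hx, hxQ⟩
    exact basic_ne_zero hμ p.1 p.2 (measure_mono_null hsub (classOf_exact hc))
  exact Set.Subset.antisymm (half _ _ h1 h2 h) (half _ _ h2 h1 h.symm)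

end Aux

/-- good liftings for `g` give good liftings for `f` when `f ≤* g`. -/
theorem good_lifting_monotone
    (μ : Measure CSp) (hμ : IsMeasureOK μ)
    (φ : MAlg μ → PFin ℕ) (hφ : IsEmbedding μ φ)
    (A : Set ℕ) (f g : ℕ → ℕ) (hfg : {n : ℕ | ¬ f n ≤ g n}.Finite)
    (Φg : MAlg μ → Set ℕ) (hlift : IsLifting φ Φg)
    (hcomp : ∀ O ⊆ BfA g A, PhiSet Φg O = PhiUnion Φg O)
    (hdisj : ∀ (n : ℕ) (s : List Bool) (m : ℕ) (t : List Bool),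
      basic n s ∩ basic m t = ∅ → PhiPt Φg n s ∩ PhiPt Φg m t = ∅) :
    ∃ Φf : MAlg μ → Set ℕ, IsLifting φ Φf ∧
      (∀ O ⊆ BfA f A, PhiSet Φf O = PhiUnion Φf O) ∧
      (∀ (n : ℕ) (s : List Bool) (m : ℕ) (t : List Bool),
        basic n s ∩ basic m t = ∅ → PhiPt Φf n s ∩ PhiPt Φf m t = ∅) := by
  classical
  -- Step 1: unions over "good" codes compute `Φg` exactly.
  have keyGood : ∀ O : Set (ℕ × List Bool), O ⊆ BfA f A → (∀ p ∈ O, f p.1 ≤ g p.1) →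
      PhiUnion Φg O = Φg (classOf μ O) := by
    intro O hO hle
    have hlenO : ∀ p ∈ O, p.2.length = f p.1 := fun p hp => (hO hp).2
    have hRefO : openSet (Ref f g O) = openSet O := openSet_Ref hlenO hle
    have step1 : ∀ p ∈ O, PhiPt Φg p.1 p.2 = PhiUnion Φg (Ref f g {p}) := by
      intro p hp
      have hO' : ∀ q ∈ ({p} : Set (ℕ × List Bool)), q.2.length = f q.1 := by
        rintro q hq
        rw [Set.mem_singleton_iff] at hq
        rw [hq]; exact hlenO p hp
      have hle' : ∀ q ∈ ({p} : Set (ℕ × List Bool)), f q.1 ≤ g q.1 := by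
        rintro q hq
        rw [Set.mem_singleton_iff] at hq
        rw [hq]; exact hle p hp
      have hsingle : openSet (Ref f g {p}) = openSet {p} := openSet_Ref hO' hle'
      have hsub : Ref f g {p} ⊆ BfA g A :=
        Ref_subset_BfA (Set.singleton_subset_iff.mpr (hO hp))
      calc PhiPt Φg p.1 p.2 = Φg (classOf μ {p}) := rfl
        _ = Φg (classOf μ (Ref f g {p})) := by rw [classOf_congr (μ := μ) hsingle]
        _ = PhiUnion Φg (Ref f g {p}) := hcomp _ hsub
    calc PhiUnion Φg O = ⋃ p ∈ O, PhiUnion Φg (Ref f g {p}) := Set.iUnion₂_congr step1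
      _ = PhiUnion Φg (Ref f g O) := by rw [Ref_biUnion f g O, PhiUnion_biUnion]
      _ = PhiSet Φg (Ref f g O) := (hcomp _ (Ref_subset_BfA hO)).symm
      _ = Φg (classOf μ O) := by unfold PhiSet; rw [classOf_congr (μ := μ) hRefO]
  -- Step 2: unions over finite codes lift correctly.
  have keyFin : ∀ O : Set (ℕ × List Bool), O.Finite →
      PFin.mk (PhiUnion Φg O) = φ (classOf μ O) := by
    intro O hfin
    refine Set.Finite.induction_on (motive := fun O _ => PFin.mk (PhiUnion Φg O) = φ (classOf μ O)) O hfin ?_ ?_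
    · rw [PhiUnion_empty, classOf_empty, hφ.map_bot]; rfl
    · intro a O' _ _ ih
      rw [PhiUnion_insert, show insert a O' = {a} ∪ O' from Set.singleton_union.symm,
        classOf_union, hφ.map_sup, PFin.mk_union, ih]
      congr 1
      exact hlift (classOf μ {a})
  -- Step 3: unions over arbitrary codes below `B_{f,A}` lift correctly.
  have keyMk : ∀ O : Set (ℕ × List Bool), O ⊆ BfA f A →
      PFin.mk (PhiUnion Φg O) = φ (classOf μ O) := by
    intro O hO
    set E : Set ℕ := {n : ℕ | ¬ f n ≤ g n} with hE
    set Ob : Set (ℕ × List Bool) := {p ∈ O | p.1 ∈ E} with hOb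
    set Og : Set (ℕ × List Bool) := {p ∈ O | p.1 ∉ E} with hOg
    have hsplit : O = Ob ∪ Og := by
      ext p
      constructor
      · intro hp
        by_cases hpE : p.1 ∈ E
        · exact Or.inl ⟨hp, hpE⟩
        · exact Or.inr ⟨hp, hpE⟩
      · rintro (⟨hp, -⟩ | ⟨hp, -⟩) <;> exact hp
    have hObfin : Ob.Finite := by
      apply Set.Finite.subset (Set.Finite.biUnion hfg
        (fun n _ => (Set.finite_singleton n).prod (finite_length_eq (f n))))
      rintro p ⟨hpO, hpE⟩
      exact Set.mem_biUnion hpE ⟨rfl, (hO hpO).2⟩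
    have hOgG : PhiUnion Φg Og = Φg (classOf μ Og) :=
      keyGood Og (fun p hp => hO hp.1) (fun p hp => not_not.mp hp.2)
    rw [hsplit, PhiUnion_union, classOf_union, hφ.map_sup, PFin.mk_union,
      keyFin Ob hObfin, hOgG]
    congr 1
    exact hlift (classOf μ Og)
  -- The new lifting.
  let Φf : MAlg μ → Set ℕ := fun a =>
    if h : ∃ O, O ⊆ BfA f A ∧ classOf μ O = a then PhiUnion Φg h.choose else Φg a
  have ΦfPos : ∀ (a : MAlg μ) (h : ∃ O, O ⊆ BfA f A ∧ classOf μ O = a),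
      Φf a = PhiUnion Φg h.choose := fun a h => dif_pos h
  have ΦfNeg : ∀ a : MAlg μ, ¬ (∃ O, O ⊆ BfA f A ∧ classOf μ O = a) → Φf a = Φg a :=
    fun a h => dif_neg h
  have ΦfSub : ∀ O : Set (ℕ × List Bool), O ⊆ BfA f A →
      Φf (classOf μ O) = PhiUnion Φg O := by
    intro O hO
    have hex : ∃ O', O' ⊆ BfA f A ∧ classOf μ O' = classOf μ O := ⟨O, hO, rfl⟩
    rw [ΦfPos _ hex]
    obtain ⟨h1, h2⟩ := hex.choose_spec
    rw [classOf_injOn hμ h1 hO h2]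
  refine ⟨Φf, ?_, ?_, ?_⟩
  · -- lifting
    intro a
    by_cases h : ∃ O, O ⊆ BfA f A ∧ classOf μ O = a
    · obtain ⟨h1, h2⟩ := h.choose_spec
      rw [ΦfPos a h, keyMk _ h1, h2]
    · rw [ΦfNeg a h]; exact hlift a
  · -- completeness below B_{f,A}
    intro O hO
    have hpt : ∀ p ∈ O, PhiPt Φf p.1 p.2 = PhiPt Φg p.1 p.2 := by
      intro p hp
      have hs : ({p} : Set (ℕ × List Bool)) ⊆ BfA f A := Set.singleton_subset_iff.mpr (hO hp)
      calc PhiPt Φf p.1 p.2 = Φf (classOf μ {p}) := rfl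
        _ = PhiUnion Φg {p} := ΦfSub {p} hs
        _ = PhiPt Φg p.1 p.2 := PhiUnion_singleton Φg p
    calc PhiSet Φf O = Φf (classOf μ O) := rfl
      _ = PhiUnion Φg O := ΦfSub O hO
      _ = PhiUnion Φf O := (Set.iUnion₂_congr hpt).symm
  · -- disjointness
    intro n s m t hnst
    have rep : ∀ (n : ℕ) (s : List Bool), ∃ O₁ : Set (ℕ × List Bool),
        classOf μ O₁ = classOf μ {(n, s)} ∧ PhiPt Φf n s = PhiUnion Φg O₁ := by
      intro n s
      by_cases h : ∃ O, O ⊆ BfA f A ∧ classOf μ O = classOf μ {(n, s)}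
      · exact ⟨h.choose, h.choose_spec.2, ΦfPos _ h⟩
      · refine ⟨{(n, s)}, rfl, ?_⟩
        calc PhiPt Φf n s = Φf (classOf μ {(n, s)}) := rfl
          _ = Φg (classOf μ {(n, s)}) := ΦfNeg _ h
          _ = PhiUnion Φg {(n, s)} := (PhiUnion_singleton Φg (n, s)).symm
    obtain ⟨O₁, hc1, he1⟩ := rep n s
    obtain ⟨O₂, hc2, he2⟩ := rep m t
    rw [he1, he2]
    have hnull1 : μ (symmDiff (openSet O₁) (basic n s)) = 0 := by
      have h := classOf_exact hc1
      rwa [openSet_singleton] at h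
    have hnull2 : μ (symmDiff (openSet O₂) (basic m t)) = 0 := by
      have h := classOf_exact hc2
      rwa [openSet_singleton] at h
    apply Set.eq_empty_iff_forall_notMem.mpr
    rintro k hk
    simp only [PhiUnion, Set.mem_inter_iff, Set.mem_iUnion] at hk
    obtain ⟨⟨p, hp, hkp⟩, ⟨q, hq, hkq⟩⟩ := hk
    have hpq : basic p.1 p.2 ∩ basic q.1 q.2 = ∅ := by
      apply basic_inter_empty_of_null hμ
      apply measure_mono_null ?_ (measure_union_null hnull1 hnull2)
      rintro x ⟨hxp, hxq⟩
      have hx1 : x ∈ openSet O₁ := basic_subset_openSet hp hxp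
      have hx2 : x ∈ openSet O₂ := basic_subset_openSet hq hxq
      by_cases hxn : x ∈ basic n s
      · have hxm : x ∉ basic m t := fun hxm =>
          Set.eq_empty_iff_forall_notMem.mp hnst x ⟨hxn, hxm⟩
        exact Set.mem_union_right _ (Set.mem_symmDiff.mpr (Or.inl ⟨hx2, hxm⟩))
      · exact Set.mem_union_left _ (Set.mem_symmDiff.mpr (Or.inl ⟨hx1, hxn⟩))
    have hd := hdisj p.1 p.2 q.1 q.2 hpq
    exact Set.eq_empty_iff_forall_notMem.mp hd k ⟨hkp, hkq⟩


end Paper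
end

section
/- Let Φ : P(ℕ) → P(ℕ×ℕ) be a lifting of a Boolean-algebra embedding φ : P(ℕ) → P(ℕ×ℕ)/fin, let A ⊆ ℕ be infinite, and let f, g ∈ ω^ω with f ≤* g. If there are D ⊆ L_g and a finite-to-one function h : D → A such that Φ(a) ∩ L_g =* h⁻¹[a] for every a ⊆ A, then there are D₁ ⊆ L_f and a finite-to-one function h₁ : D₁ → A such that Φ(a) ∩ L_f =* h₁⁻¹[a] for every a ⊆ A. -/
open Set MeasureTheory
open scoped ENNReal

namespace Paper

/-- `φ : P(ℕ) → P(α)/fin` is a Boolean-algebra embedding -/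
structure IsEmbeddingPN {α : Type} (φ : Set ℕ → PFin α) : Prop where
  injective : Function.Injective φ
  map_sup : ∀ a b : Set ℕ, φ (a ∪ b) = PFin.sup (φ a) (φ b)
  map_inf : ∀ a b : Set ℕ, φ (a ∩ b) = PFin.inf (φ a) (φ b)
  map_compl : ∀ a : Set ℕ, φ aᶜ = PFin.compl (φ a)
  map_bot : φ ∅ = PFin.bot
  map_top : φ Set.univ = PFin.top

/-- `Φ` is a lifting of `φ : P(ℕ) → P(α)/fin` -/
def IsLiftingPN {α : Type} (φ : Set ℕ → PFin α) (Φ : Set ℕ → Set α) : Prop :=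
  ∀ a, PFin.mk (Φ a) = φ a

/-- the vertical column `V_n = {n} × ℕ` of `ℕ × ℕ` -/
def Vcol (n : ℕ) : Set (ℕ × ℕ) := {p | p.1 = n}

/-- `L_f = {(n,m) : m ≤ f(n)}` -/
def Lset (f : ℕ → ℕ) : Set (ℕ × ℕ) := {p | p.2 ≤ f p.1}

/-- being simple on `A` below `L_g` implies being simple on `A` below `L_f`
when `f ≤* g`. -/
theorem simple_below_Lg_gives_simple_below_Lf
    (φ : Set ℕ → PFin (ℕ × ℕ)) (hφ : IsEmbeddingPN φ)
    (Φ : Set ℕ → Set (ℕ × ℕ)) (hΦ : IsLiftingPN φ Φ)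
    (A : Set ℕ) (hA : A.Infinite)
    (f g : ℕ → ℕ) (hfg : {n : ℕ | ¬ f n ≤ g n}.Finite)
    (D : Set (ℕ × ℕ)) (hD : D ⊆ Lset g)
    (h : ℕ × ℕ → ℕ) (hmaps : ∀ p ∈ D, h p ∈ A)
    (hfto : ∀ n : ℕ, {p ∈ D | h p = n}.Finite)
    (hrep : ∀ a ⊆ A, AlmostEq (Φ a ∩ Lset g) {p ∈ D | h p ∈ a}) :
    ∃ (D₁ : Set (ℕ × ℕ)) (h₁ : ℕ × ℕ → ℕ), D₁ ⊆ Lset f ∧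
      (∀ p ∈ D₁, h₁ p ∈ A) ∧ (∀ n : ℕ, {p ∈ D₁ | h₁ p = n}.Finite) ∧
      ∀ a ⊆ A, AlmostEq (Φ a ∩ Lset f) {p ∈ D₁ | h₁ p ∈ a} := by
  have hLfg : (Lset f \ Lset g).Finite := by
    have : Lset f \ Lset g ⊆ ⋃ n ∈ {n : ℕ | ¬ f n ≤ g n}, Prod.mk n '' Set.Iic (f n) := by
      rintro ⟨n, m⟩ ⟨h1, h2⟩
      simp only [Lset, Set.mem_setOf_eq] at h1 h2
      refine Set.mem_biUnion (show ¬ f n ≤ g n from fun hle => h2 (le_trans h1 hle)) ?_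
      exact ⟨m, h1, rfl⟩
    exact Set.Finite.subset (hfg.biUnion fun n _ => (Set.finite_Iic (f n)).image _) this
  refine ⟨D ∩ Lset f, h, fun p hp => hp.2, fun p hp => hmaps p hp.1,
    fun n => (hfto n).subset fun p hp => ⟨hp.1.1, hp.2⟩, fun a ha => ?_⟩
  refine ((hLfg.union (hrep a ha)).subset ?_ : _)
  rintro p hp
  rw [Set.mem_symmDiff] at hp
  simp only [Set.mem_union, Set.mem_symmDiff, Set.mem_inter_iff, Set.mem_setOf_eq,
    Set.mem_diff]
  rcases hp with ⟨⟨hΦa, hLf⟩, hns⟩ | ⟨hs, hn⟩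
  · simp only [Set.mem_setOf_eq, Set.mem_inter_iff] at hns
    by_cases hLg : p ∈ Lset g
    · right; left
      exact ⟨⟨hΦa, hLg⟩, fun ⟨hpD, hpa⟩ => hns ⟨⟨hpD, hLf⟩, hpa⟩⟩
    · exact Or.inl ⟨hLf, hLg⟩
  · simp only [Set.mem_setOf_eq, Set.mem_inter_iff] at hs hn
    right; right
    refine ⟨⟨hs.1.1, hs.2⟩, fun ⟨hΦa, _⟩ => hn ⟨hΦa, hs.1.2⟩⟩

end Paper
end

section
/- Let Φ : P(ℕ) → P(ℕ×ℕ) be a lifting of a Boolean-algebra embedding φ : P(ℕ) → P(ℕ×ℕ)/fin, let A ⊆ ℕ be infinite, and let f, g ∈ ω^ω with f(n) ≤ g(n) for all n. Suppose D_f ⊆ L_f and D_g ⊆ L_g and finite-to-one functions h_f : D_f → A and h_g : D_g → A satisfy Φ(a) ∩ L_f =* h_f⁻¹[a] and Φ(a) ∩ L_g =* h_g⁻¹[a] for every a ⊆ A. Then D_f =* D_g ∩ L_f, and h_g(p) = h_f(p) for all but finitely many p ∈ D_f ∩ D_g. -/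
open Set MeasureTheory
open scoped ENNReal

namespace Paper

lemma almostEq_symm {α : Type} {X Y : Set α} (h : AlmostEq X Y) : AlmostEq Y X := by
  unfold AlmostEq at *; rwa [symmDiff_comm]

lemma almostEq_trans {α : Type} {X Y Z : Set α} (h1 : AlmostEq X Y) (h2 : AlmostEq Y Z) :
    AlmostEq X Z :=
  (h1.union h2).subset (symmDiff_triangle X Y Z)

lemma almostEq_inter {α : Type} {X Y : Set α} (Z : Set α) (h : AlmostEq X Y) :
    AlmostEq (X ∩ Z) (Y ∩ Z) := by
  refine h.subset ?_
  intro x hx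
  simp only [Set.mem_symmDiff, Set.mem_inter_iff] at hx ⊢
  tauto

/-- the witnessing pairs `(D_f, h_f)` and `(D_g, h_g)` cohere when `f ≤ g`. -/
theorem simple_witnesses_cohere
    (φ : Set ℕ → PFin (ℕ × ℕ)) (hφ : IsEmbeddingPN φ)
    (Φ : Set ℕ → Set (ℕ × ℕ)) (hΦ : IsLiftingPN φ Φ)
    (A : Set ℕ) (hA : A.Infinite)
    (f g : ℕ → ℕ) (hfg : ∀ n, f n ≤ g n)
    (Df Dg : Set (ℕ × ℕ)) (hDf : Df ⊆ Lset f) (hDg : Dg ⊆ Lset g)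
    (hf hg : ℕ × ℕ → ℕ)
    (hmf : ∀ p ∈ Df, hf p ∈ A) (hmg : ∀ p ∈ Dg, hg p ∈ A)
    (hftof : ∀ n : ℕ, {p ∈ Df | hf p = n}.Finite)
    (hftog : ∀ n : ℕ, {p ∈ Dg | hg p = n}.Finite)
    (hrepf : ∀ a ⊆ A, AlmostEq (Φ a ∩ Lset f) {p ∈ Df | hf p ∈ a})
    (hrepg : ∀ a ⊆ A, AlmostEq (Φ a ∩ Lset g) {p ∈ Dg | hg p ∈ a}) :
    AlmostEq Df (Dg ∩ Lset f) ∧ {p ∈ Df ∩ Dg | hg p ≠ hf p}.Finite := by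
  classical
  have hLfg : Lset f ⊆ Lset g := fun p hp => le_trans hp (hfg p.1)
  -- Part 1
  have hDfA : {p ∈ Df | hf p ∈ A} = Df := by
    ext p; simp only [Set.mem_setOf_eq, Set.mem_sep_iff]
    exact ⟨fun h => h.1, fun h => ⟨h, hmf p h⟩⟩
  have hDgA : {p ∈ Dg | hg p ∈ A} = Dg := by
    ext p; simp only [Set.mem_setOf_eq, Set.mem_sep_iff]
    exact ⟨fun h => h.1, fun h => ⟨h, hmg p h⟩⟩
  have h1 : AlmostEq (Φ A ∩ Lset f) Df := by
    have := hrepf A subset_rfl; rwa [hDfA] at this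
  have h2 : AlmostEq (Φ A ∩ Lset g) Dg := by
    have := hrepg A subset_rfl; rwa [hDgA] at this
  have h2' : AlmostEq (Φ A ∩ Lset f) (Dg ∩ Lset f) := by
    have := almostEq_inter (Lset f) h2
    rwa [Set.inter_assoc, Set.inter_eq_self_of_subset_right hLfg] at this
  have part1 : AlmostEq Df (Dg ∩ Lset f) := almostEq_trans (almostEq_symm h1) h2'
  refine ⟨part1, ?_⟩
  -- Part 2
  by_contra hSfin
  have hSinf : {p ∈ Df ∩ Dg | hg p ≠ hf p}.Infinite := hSfin
  set S := {p ∈ Df ∩ Dg | hg p ≠ hf p} with hSdef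
  -- finiteness of "bad" sets
  have hBadf : ∀ V : Finset ℕ, {p ∈ Df | hf p ∈ V}.Finite := by
    intro V
    refine (V.finite_toSet.biUnion (fun v _ => hftof v)).subset ?_
    intro p hp
    simp only [Set.mem_iUnion, Set.mem_sep_iff, Finset.mem_coe, Set.mem_setOf_eq] at hp ⊢
    exact ⟨hf p, hp.2, hp.1, rfl⟩
  have hBadg : ∀ V : Finset ℕ, {p ∈ Dg | hg p ∈ V}.Finite := by
    intro V
    refine (V.finite_toSet.biUnion (fun v _ => hftog v)).subset ?_
    intro p hp
    simp only [Set.mem_iUnion, Set.mem_sep_iff, Finset.mem_coe, Set.mem_setOf_eq] at hp ⊢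
    exact ⟨hg p, hp.2, hp.1, rfl⟩
  set Vals : Finset (ℕ × ℕ) → Finset ℕ := fun s => s.image hf ∪ s.image hg with hVals
  have hnextE : ∀ s : Finset (ℕ × ℕ),
      ∃ p, p ∈ S \ ({p ∈ Df | hf p ∈ Vals s} ∪ {p ∈ Dg | hg p ∈ Vals s}) :=
    fun s => (hSinf.diff ((hBadf (Vals s)).union (hBadg (Vals s)))).nonempty
  choose next hnext using hnextE
  set chosen : ℕ → Finset (ℕ × ℕ) :=
    fun k => Nat.rec (∅ : Finset (ℕ × ℕ)) (fun _ s => insert (next s) s) k with hchosen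
  set seq : ℕ → ℕ × ℕ := fun k => next (chosen k) with hseq
  have hseqS : ∀ k, seq k ∈ S := fun k => (hnext (chosen k)).1
  have hseqDf : ∀ k, seq k ∈ Df := fun k => (hseqS k).1.1
  have hseqDg : ∀ k, seq k ∈ Dg := fun k => (hseqS k).1.2
  have hseqNe : ∀ k, hg (seq k) ≠ hf (seq k) := fun k => (hseqS k).2
  have hfreshf : ∀ k, hf (seq k) ∉ Vals (chosen k) := by
    intro k hmem
    exact (hnext (chosen k)).2 (Or.inl ⟨hseqDf k, hmem⟩)
  have hfreshg : ∀ k, hg (seq k) ∉ Vals (chosen k) := by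
    intro k hmem
    exact (hnext (chosen k)).2 (Or.inr ⟨hseqDg k, hmem⟩)
  have hmem_chosen : ∀ j k, j < k → seq j ∈ chosen k := by
    intro j k hjk
    induction k with
    | zero => omega
    | succ n ih =>
      rcases Nat.lt_succ_iff_lt_or_eq.mp hjk with h | h
      · exact Finset.mem_insert_of_mem (ih h)
      · subst h; exact Finset.mem_insert_self _ _
  have hfmem : ∀ j k, j < k → hf (seq j) ∈ Vals (chosen k) := by
    intro j k hjk
    exact Finset.mem_union_left _ (Finset.mem_image_of_mem hf (hmem_chosen j k hjk))
  have hgmem : ∀ j k, j < k → hg (seq j) ∈ Vals (chosen k) := by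
    intro j k hjk
    exact Finset.mem_union_right _ (Finset.mem_image_of_mem hg (hmem_chosen j k hjk))
  -- the separating set a
  set a : Set ℕ := Set.range (fun k => hf (seq k)) with ha
  have haA : a ⊆ A := by
    rintro v ⟨k, rfl⟩; exact hmf _ (hseqDf k)
  have hga : ∀ k, hg (seq k) ∉ a := by
    rintro k ⟨j, hj⟩
    have hj' : hf (seq j) = hg (seq k) := hj
    rcases lt_trichotomy j k with h | h | h
    · exact hfreshg k (hj' ▸ hfmem j k h)
    · subst h; exact hseqNe j hj'.symm
    · refine hfreshf j ?_
      rw [hj']; exact hgmem k j h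
  have hfa : ∀ k, hf (seq k) ∈ a := fun k => ⟨k, rfl⟩
  -- injectivity
  have hinj : Function.Injective seq := by
    intro j k hjk
    by_contra hne
    rcases lt_or_gt_of_ne hne with h | h
    · exact hfreshf k (hjk ▸ hfmem j k h)
    · exact hfreshf j (hjk ▸ hfmem k j h)
  have hrange : (Set.range seq).Infinite := Set.infinite_range_of_injective hinj
  -- contradiction
  have hsub : Set.range seq ⊆
      symmDiff (Φ a ∩ Lset f) {p ∈ Df | hf p ∈ a} ∪
      symmDiff (Φ a ∩ Lset g) {p ∈ Dg | hg p ∈ a} := by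
    rintro p ⟨k, rfl⟩
    by_cases hp : seq k ∈ Φ a ∩ Lset f
    · refine Or.inr ?_
      rw [Set.mem_symmDiff]
      exact Or.inl ⟨⟨hp.1, hLfg hp.2⟩, fun hc => hga k hc.2⟩
    · refine Or.inl ?_
      rw [Set.mem_symmDiff]
      exact Or.inr ⟨⟨hseqDf k, hfa k⟩, hp⟩
  exact hrange (((hrepf a haA).union (hrepg a haA)).subset hsub)

end Paper
end

section
/- Let Φ : P(ℕ) → P(ℕ×ℕ) be a lifting of a Boolean-algebra embedding φ : P(ℕ) → P(ℕ×ℕ)/fin with Φ({n}) = V_n for every n, let A ⊆ ℕ be infinite, and let D ⊆ ℕ×ℕ and H : D → A be such that for every f ∈ ω^ω there are a set D_f ⊆ L_f and a finite-to-one function h_f : D_f → A with: Φ(a) ∩ L_f =* h_f⁻¹[a] for every a ⊆ A; D ∩ L_f =* D_f; and H(p) = h_f(p) for all but finitely many p ∈ D ∩ D_f. Then the set of m ∈ A for which {n ∈ A : H⁻¹(n) ∩ V_m ≠ ∅} is infinite is finite (here H⁻¹(n) denotes H⁻¹({n}) ⊆ D). -/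
open Set MeasureTheory
open scoped ENNReal

namespace Paper

section Aux

/-- choose the least element of a constraint set -/
noncomputable def stepFn (SS : Set ℕ) (NN : ℕ → Set ℕ) (h : ℕ → ℕ) (s : ℕ) : ℕ :=
  sInf ((if (Nat.unpair s).2 = 0 then SS else NN (h (Nat.pair (Nat.unpair s).1 0))) ∩
    {y | ∀ t < s, h t < y})

/-- history of the recursion up to stage `s` -/
noncomputable def stFn (SS : Set ℕ) (NN : ℕ → Set ℕ) : ℕ → ℕ → ℕ
  | 0 => fun _ => 0
  | s + 1 => Function.update (stFn SS NN s) s (stepFn SS NN (stFn SS NN s) s)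

/-- the diagonal sequence -/
noncomputable def xxFn (SS : Set ℕ) (NN : ℕ → Set ℕ) (s : ℕ) : ℕ := stFn SS NN (s + 1) s

lemma stFn_coh (SS : Set ℕ) (NN : ℕ → Set ℕ) :
    ∀ s t, t < s → stFn SS NN s t = xxFn SS NN t := by
  intro s
  induction s with
  | zero => intro t ht; omega
  | succ s IH =>
    intro t ht
    rcases Nat.lt_succ_iff_lt_or_eq.mp ht with h | h
    · have hne : t ≠ s := Nat.ne_of_lt h
      show Function.update (stFn SS NN s) s (stepFn SS NN (stFn SS NN s) s) t = _
      rw [Function.update_of_ne hne]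
      exact IH t h
    · subst h; rfl

lemma xxFn_spec (SS : Set ℕ) (NN : ℕ → Set ℕ) (hS : SS.Infinite)
    (hN : ∀ m ∈ SS, (NN m).Infinite) (s : ℕ) :
    (xxFn SS NN s ∈ (if (Nat.unpair s).2 = 0 then SS
        else NN (xxFn SS NN (Nat.pair (Nat.unpair s).1 0)))) ∧
      ∀ t < s, xxFn SS NN t < xxFn SS NN s := by
  induction s using Nat.strong_induction_on with
  | _ s IH =>
    have hx : xxFn SS NN s = stepFn SS NN (stFn SS NN s) s := by
      show Function.update (stFn SS NN s) s (stepFn SS NN (stFn SS NN s) s) s = _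
      rw [Function.update_self]
    have hlt0 : (Nat.unpair s).2 ≠ 0 → Nat.pair (Nat.unpair s).1 0 < s := by
      intro h0
      calc Nat.pair (Nat.unpair s).1 0
          < Nat.pair (Nat.unpair s).1 (Nat.unpair s).2 :=
            Nat.pair_lt_pair_right _ (Nat.pos_of_ne_zero h0)
        _ = s := Nat.pair_unpair s
    have hset : ((if (Nat.unpair s).2 = 0 then SS
          else NN (stFn SS NN s (Nat.pair (Nat.unpair s).1 0))) ∩
          {y | ∀ t < s, stFn SS NN s t < y})
        = ((if (Nat.unpair s).2 = 0 then SS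
          else NN (xxFn SS NN (Nat.pair (Nat.unpair s).1 0))) ∩
          {y | ∀ t < s, xxFn SS NN t < y}) := by
      congr 1
      · by_cases h0 : (Nat.unpair s).2 = 0
        · simp [h0]
        · rw [stFn_coh SS NN s _ (hlt0 h0)]
      · ext y
        simp only [Set.mem_setOf_eq]
        constructor
        · intro hy t ht; rw [← stFn_coh SS NN s t ht]; exact hy t ht
        · intro hy t ht; rw [stFn_coh SS NN s t ht]; exact hy t ht
    have hTinf : (if (Nat.unpair s).2 = 0 then SS
        else NN (xxFn SS NN (Nat.pair (Nat.unpair s).1 0))).Infinite := by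
      by_cases h0 : (Nat.unpair s).2 = 0
      · simpa [h0] using hS
      · have hmem := (IH _ (hlt0 h0)).1
        rw [Nat.unpair_pair] at hmem
        simp only [if_pos rfl] at hmem
        simp only [if_neg h0]
        exact hN _ hmem
    obtain ⟨y, hyT, hylt⟩ := hTinf.exists_gt ((Finset.range s).sup (xxFn SS NN))
    have hyY : y ∈ ((if (Nat.unpair s).2 = 0 then SS
          else NN (xxFn SS NN (Nat.pair (Nat.unpair s).1 0))) ∩
          {y | ∀ t < s, xxFn SS NN t < y}) :=
      ⟨hyT, fun t ht => lt_of_le_of_lt (Finset.le_sup (Finset.mem_range.mpr ht)) hylt⟩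
    have hne : ((if (Nat.unpair s).2 = 0 then SS
          else NN (stFn SS NN s (Nat.pair (Nat.unpair s).1 0))) ∩
          {y | ∀ t < s, stFn SS NN s t < y}).Nonempty := by
      rw [hset]; exact ⟨y, hyY⟩
    have hmem : stepFn SS NN (stFn SS NN s) s ∈
        ((if (Nat.unpair s).2 = 0 then SS
          else NN (stFn SS NN s (Nat.pair (Nat.unpair s).1 0))) ∩
          {y | ∀ t < s, stFn SS NN s t < y}) := Nat.sInf_mem hne
    rw [hset] at hmem
    rw [hx]
    exact ⟨hmem.1, fun t ht => hmem.2 t ht⟩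

end Aux

/-- only finitely many `m ∈ A` have `H⁻¹(n) ∩ V_m ≠ ∅` for infinitely many
`n ∈ A`. -/
theorem finitely_many_bad_columns
    (φ : Set ℕ → PFin (ℕ × ℕ)) (hφ : IsEmbeddingPN φ)
    (Φ : Set ℕ → Set (ℕ × ℕ)) (hΦ : IsLiftingPN φ Φ)
    (hV : ∀ n : ℕ, Φ {n} = Vcol n)
    (A : Set ℕ) (hA : A.Infinite)
    (D : Set (ℕ × ℕ)) (H : ℕ × ℕ → ℕ) (hH : ∀ p ∈ D, H p ∈ A)
    (hcond : ∀ f : ℕ → ℕ, ∃ (Df : Set (ℕ × ℕ)) (hf : ℕ × ℕ → ℕ),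
      Df ⊆ Lset f ∧ (∀ p ∈ Df, hf p ∈ A) ∧ (∀ n : ℕ, {p ∈ Df | hf p = n}.Finite) ∧
      (∀ a ⊆ A, AlmostEq (Φ a ∩ Lset f) {p ∈ Df | hf p ∈ a}) ∧
      AlmostEq (D ∩ Lset f) Df ∧
      {p ∈ D ∩ Df | H p ≠ hf p}.Finite) :
    {m ∈ A | {n ∈ A | ({p ∈ D | H p = n} ∩ Vcol m).Nonempty}.Infinite}.Finite := by
  classical
  by_contra hfin
  set NN : ℕ → Set ℕ := fun m => {n ∈ A | ({p ∈ D | H p = n} ∩ Vcol m).Nonempty} with hNN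
  set SS : Set ℕ := {m ∈ A | (NN m).Infinite} with hSS
  have hSinf : SS.Infinite := hfin
  have hNinf : ∀ m ∈ SS, (NN m).Infinite := fun m hm => hm.2
  have hSA : SS ⊆ A := fun m hm => hm.1
  set x : ℕ → ℕ := xxFn SS NN with hxdef
  have spec : ∀ s, (x s ∈ (if (Nat.unpair s).2 = 0 then SS
      else NN (x (Nat.pair (Nat.unpair s).1 0)))) ∧ ∀ t < s, x t < x s :=
    fun s => xxFn_spec SS NN hSinf hNinf s
  have hmono : ∀ {t s : ℕ}, t < s → x t < x s := fun {t s} h => (spec s).2 t h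
  have hxinj : Function.Injective x := by
    intro t s h
    rcases lt_trichotomy t s with hl | he | hg
    · exact absurd h (Nat.ne_of_lt (hmono hl))
    · exact he
    · exact absurd h.symm (Nat.ne_of_lt (hmono hg))
  have hμS : ∀ j, x (Nat.pair j 0) ∈ SS := by
    intro j
    have h := (spec (Nat.pair j 0)).1
    rw [Nat.unpair_pair] at h
    simpa using h
  have hμinj : ∀ {j k : ℕ}, x (Nat.pair j 0) = x (Nat.pair k 0) → j = k := by
    intro j k h
    exact (Nat.pair_eq_pair.mp (hxinj h)).1
  have hrN : ∀ j i, x (Nat.pair j (i + 1)) ∈ NN (x (Nat.pair j 0)) := by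
    intro j i
    have h := (spec (Nat.pair j (i + 1))).1
    rw [Nat.unpair_pair] at h
    simpa using h
  set a : Set ℕ := Set.range (fun j => x (Nat.pair j 0)) with ha
  have haA : a ⊆ A := by rintro _ ⟨j, rfl⟩; exact hSA (hμS j)
  have hra : ∀ j i, x (Nat.pair j (i + 1)) ∉ a := by
    rintro j i ⟨k, hk⟩
    have h1 := (Nat.pair_eq_pair.mp (hxinj hk)).2
    exact Nat.succ_ne_zero i h1.symm
  have hcol : ∀ j, (Vcol (x (Nat.pair j 0)) \ Φ a).Finite := by
    intro j
    have hmem : x (Nat.pair j 0) ∈ a := ⟨j, rfl⟩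
    have h1 : φ ({x (Nat.pair j 0)} ∪ a) = φ a := by
      rw [Set.union_eq_self_of_subset_left (Set.singleton_subset_iff.mpr hmem)]
    rw [hφ.map_sup] at h1
    have h3 : φ {x (Nat.pair j 0)} = PFin.mk (Vcol (x (Nat.pair j 0))) := by
      rw [← hΦ, hV]
    have h4 : φ a = PFin.mk (Φ a) := (hΦ a).symm
    rw [h3, h4] at h1
    have h5 : PFin.mk (Vcol (x (Nat.pair j 0)) ∪ Φ a) = PFin.mk (Φ a) := h1
    have h6 : (symmDiff (Vcol (x (Nat.pair j 0)) ∪ Φ a) (Φ a)).Finite := Quotient.exact h5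
    refine h6.subset ?_
    intro p hp
    exact Set.mem_symmDiff.mpr (Or.inl ⟨Or.inl hp.1, hp.2⟩)
  have hPw : ∀ j, ∃ qq : ℕ × ℕ, qq ∈ D ∧ qq.1 = x (Nat.pair j 0) ∧
      (∃ i, H qq = x (Nat.pair j (i + 1))) ∧ qq ∈ Φ a := by
    intro j
    have hrinj : Function.Injective (fun i => x (Nat.pair j (i + 1))) := by
      intro i i' h
      have h2 := (Nat.pair_eq_pair.mp (hxinj h)).2
      omega
    have him : Set.range (fun i => x (Nat.pair j (i + 1))) ⊆
        H '' {p : ℕ × ℕ | p ∈ D ∧ p.1 = x (Nat.pair j 0) ∧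
          ∃ i, H p = x (Nat.pair j (i + 1))} := by
      rintro _ ⟨i, rfl⟩
      obtain ⟨hA', p, hp, hpV⟩ := hrN j i
      exact ⟨p, ⟨hp.1, hpV, ⟨i, hp.2⟩⟩, hp.2⟩
    have hPinf : {p : ℕ × ℕ | p ∈ D ∧ p.1 = x (Nat.pair j 0) ∧
        ∃ i, H p = x (Nat.pair j (i + 1))}.Infinite :=
      Set.Infinite.of_image H ((Set.infinite_range_of_injective hrinj).mono him)
    have hdiff := hPinf.diff (hcol j)
    obtain ⟨qq, ⟨h1, h2, h3⟩, hq2⟩ := hdiff.nonempty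
    refine ⟨qq, h1, h2, h3, ?_⟩
    by_contra hc
    exact hq2 ⟨h2, hc⟩
  choose q hqD hqV hqH hqΦ using hPw
  set f : ℕ → ℕ := fun m => if h : ∃ k, x (Nat.pair k 0) = m then (q h.choose).2 else 0
    with hfdef
  have hfq : ∀ j, f (x (Nat.pair j 0)) = (q j).2 := by
    intro j
    have hex : ∃ k, x (Nat.pair k 0) = x (Nat.pair j 0) := ⟨j, rfl⟩
    have hrw : f (x (Nat.pair j 0)) =
        if h : ∃ k, x (Nat.pair k 0) = x (Nat.pair j 0) then (q h.choose).2 else 0 := rfl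
    rw [hrw, dif_pos hex]
    exact congrArg (fun k => (q k).2) (hμinj hex.choose_spec)
  have hqL : ∀ j, q j ∈ Lset f := by
    intro j
    show (q j).2 ≤ f (q j).1
    rw [hqV j, hfq j]
  obtain ⟨Df, hf, hsub, hmapA, hfto, halm, hDDf, hHhf⟩ := hcond f
  have hFa : (symmDiff (Φ a ∩ Lset f) {p ∈ Df | hf p ∈ a}).Finite := halm a haA
  have hE1 : (symmDiff (D ∩ Lset f) Df).Finite := hDDf
  have hErr : (symmDiff (Φ a ∩ Lset f) {p ∈ Df | hf p ∈ a} ∪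
      (symmDiff (D ∩ Lset f) Df ∪ {p ∈ D ∩ Df | H p ≠ hf p})).Finite :=
    hFa.union (hE1.union hHhf)
  have hqE : ∀ j, q j ∈ symmDiff (Φ a ∩ Lset f) {p ∈ Df | hf p ∈ a} ∪
      (symmDiff (D ∩ Lset f) Df ∪ {p ∈ D ∩ Df | H p ≠ hf p}) := by
    intro j
    by_contra hc
    simp only [Set.mem_union, not_or] at hc
    obtain ⟨hc1, hc2, hc3⟩ := hc
    have hDf : q j ∈ Df := by
      by_contra hnd
      exact hc2 (Set.mem_symmDiff.mpr (Or.inl ⟨⟨hqD j, hqL j⟩, hnd⟩))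
    have hHeq : H (q j) = hf (q j) := by
      by_contra hne
      exact hc3 ⟨⟨hqD j, hDf⟩, hne⟩
    have hnot : hf (q j) ∉ a := by
      rw [← hHeq]
      obtain ⟨i, hi⟩ := hqH j
      rw [hi]
      exact hra j i
    exact hc1 (Set.mem_symmDiff.mpr (Or.inl ⟨⟨hqΦ j, hqL j⟩, fun hmem => hnot hmem.2⟩))
  have hqinj : Function.Injective q := by
    intro j k h
    apply hμinj
    rw [← hqV j, ← hqV k, h]
  exact (Set.infinite_range_of_injective hqinj)
    (hErr.subset (by rintro _ ⟨j, rfl⟩; exact hqE j))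


end Paper
end

section
/- Let Φ : P(ℕ) → P(ℕ×ℕ) be a lifting of a Boolean-algebra embedding φ : P(ℕ) → P(ℕ×ℕ)/fin with Φ({n}) = V_n for every n, let A ⊆ ℕ be infinite, and let D ⊆ ℕ×ℕ and H : D → A be such that for every f ∈ ω^ω there are a set D_f ⊆ L_f and a finite-to-one function h_f : D_f → A with: Φ(a) ∩ L_f =* h_f⁻¹[a] for every a ⊆ A; D ∩ L_f =* D_f; and H(p) = h_f(p) for all but finitely many p ∈ D ∩ D_f. Then for every n ∈ A the set {m ∈ A : H⁻¹(n) ∩ V_m ≠ ∅} is finite (here H⁻¹(n) denotes H⁻¹({n}) ⊆ D). -/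
open Set MeasureTheory
open scoped ENNReal

namespace Paper

/-- for every `n ∈ A`, the fibre `H⁻¹(n)` meets only finitely many columns
`V_m` with `m ∈ A`. -/
theorem fibre_meets_finitely_many_columns
    (φ : Set ℕ → PFin (ℕ × ℕ)) (hφ : IsEmbeddingPN φ)
    (Φ : Set ℕ → Set (ℕ × ℕ)) (hΦ : IsLiftingPN φ Φ)
    (hV : ∀ n : ℕ, Φ {n} = Vcol n)
    (A : Set ℕ) (hA : A.Infinite)
    (D : Set (ℕ × ℕ)) (H : ℕ × ℕ → ℕ) (hH : ∀ p ∈ D, H p ∈ A)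
    (hcond : ∀ f : ℕ → ℕ, ∃ (Df : Set (ℕ × ℕ)) (hf : ℕ × ℕ → ℕ),
      Df ⊆ Lset f ∧ (∀ p ∈ Df, hf p ∈ A) ∧ (∀ n : ℕ, {p ∈ Df | hf p = n}.Finite) ∧
      (∀ a ⊆ A, AlmostEq (Φ a ∩ Lset f) {p ∈ Df | hf p ∈ a}) ∧
      AlmostEq (D ∩ Lset f) Df ∧
      {p ∈ D ∩ Df | H p ≠ hf p}.Finite) :
    ∀ n ∈ A, {m ∈ A | ({p ∈ D | H p = n} ∩ Vcol m).Nonempty}.Finite := by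
  classical
  intro n hn
  by_contra hfin
  set S := {m ∈ A | ({p ∈ D | H p = n} ∩ Vcol m).Nonempty} with hSdef
  have hS : S.Infinite := hfin
  have hg : ∀ m : ℕ, ∃ p : ℕ × ℕ, m ∈ S → p ∈ D ∧ H p = n ∧ p.1 = m := by
    intro m
    by_cases hm : m ∈ S
    · obtain ⟨p, hp⟩ := hm.2
      exact ⟨p, fun _ => ⟨hp.1.1, hp.1.2, hp.2⟩⟩
    · exact ⟨(0, 0), fun h => absurd h hm⟩
  choose g hgspec using hg
  set f : ℕ → ℕ := fun m => (g m).2 with hfdef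
  obtain ⟨Df, hf, hDfL, _, hfto, _, hAE, hHhf⟩ := hcond f
  have hinj : Set.InjOn g S := by
    intro m hm m' hm' h
    have h1 := (hgspec m hm).2.2
    have h2 := (hgspec m' hm').2.2
    rw [← h1, ← h2, h]
  have himg : (g '' S).Infinite := hS.image hinj
  have hsub : g '' S ⊆ symmDiff (D ∩ Lset f) Df ∪ {p ∈ D ∩ Df | H p ≠ hf p}
      ∪ {p ∈ Df | hf p = n} := by
    rintro p ⟨m, hm, rfl⟩
    obtain ⟨hD, hHn, hfst⟩ := hgspec m hm
    have hL : g m ∈ Lset f := by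
      show (g m).2 ≤ f (g m).1
      rw [hfst]
    by_cases hDf : g m ∈ Df
    · by_cases heq : hf (g m) = n
      · exact Or.inr ⟨hDf, heq⟩
      · exact Or.inl (Or.inr ⟨⟨hD, hDf⟩, fun h => heq (h ▸ hHn)⟩)
    · exact Or.inl (Or.inl (Set.mem_symmDiff.mpr (Or.inl ⟨⟨hD, hL⟩, hDf⟩)))
  exact himg (((hAE.union hHhf).union (hfto n)).subset hsub)

end Paper
end
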